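/- Let h, τ, τ' be naturals with τ' < τ ≤ h/2 and suppose k ≥ 1. If binom(h,τ) elements are each assigned one of binom(h,τ') 'rung-position patterns', and h = τ(k^(τ-1) + τ), then some pattern is assigned to at least k^(τ-1) + 1 elements. -/
import Mathlib

lemma choose_mono_of_le_half {n r s : ℕ} (hrs : r ≤ s) (hs : s ≤ n / 2) :
    Nat.choose n r ≤ Nat.choose n s := by
  induction s, hrs using Nat.le_induction with
  | base => rfl
  | succ m hm ih =>
    exact (ih (le_trans (Nat.le_succ m) hs)).trans
      (Nat.choose_le_succ_of_lt_half_left (lt_of_lt_of_le (Nat.lt_succ_self m) hs))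

/-- Pigeonhole with the binomial bounds: if binom(h,τ) elements are each
    assigned one of binom(h,τ') patterns, τ' < τ ≤ h/2, k ≥ 1, and
    h = τ(k^(τ-1)+τ), then some pattern receives at least k^(τ-1)+1 elements. -/
theorem pigeonhole_rung_patterns (h τ τ' k : ℕ) (hk : 1 ≤ k)
    (hττ' : τ' < τ) (hτh : 2 * τ ≤ h)
    (hh : h = τ * (k ^ (τ - 1) + τ))
    (f : Fin (Nat.choose h τ) → Fin (Nat.choose h τ')) :
    ∃ p : Fin (Nat.choose h τ'),
      k ^ (τ - 1) + 1 ≤ (Finset.univ.filter (fun x => f x = p)).card := by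
  set K := k ^ (τ - 1) with hK
  have hτpos : 0 < τ := Nat.pos_of_ne_zero (by omega)
  have hτ1h : τ - 1 ≤ h / 2 := by
    rw [Nat.le_div_iff_mul_le (by norm_num)]; omega
  -- τ' ≤ τ - 1 ≤ h/2, so choose h τ' ≤ choose h (τ-1)
  have hAB : Nat.choose h τ' ≤ Nat.choose h (τ - 1) :=
    choose_mono_of_le_half (by omega) hτ1h
  -- identity
  have hid : Nat.choose h τ * τ = Nat.choose h (τ - 1) * (h - (τ - 1)) := by
    have := Nat.choose_succ_right_eq h (τ - 1)
    rwa [Nat.sub_add_cancel hτpos] at this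
  -- h - (τ-1) ≥ τ*(K+1)
  have hge : τ * (K + 1) ≤ h - (τ - 1) := by
    have h1 : τ * (K + 1) + (τ - 1) ≤ h := by
      rw [hh]; nlinarith [Nat.sub_add_cancel hτpos]
    omega
  have hmain : Nat.choose h τ' * (K + 1) ≤ Nat.choose h τ := by
    have h2 : Nat.choose h τ' * (K + 1) * τ ≤ Nat.choose h τ * τ := by
      rw [hid]
      calc Nat.choose h τ' * (K + 1) * τ ≤ Nat.choose h (τ - 1) * ((K + 1) * τ) := by
            rw [Nat.mul_assoc]; exact Nat.mul_le_mul_right _ hAB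
        _ ≤ Nat.choose h (τ - 1) * (h - (τ - 1)) :=
            Nat.mul_le_mul_left _ (by rw [Nat.mul_comm]; exact hge)
    exact Nat.le_of_mul_le_mul_right h2 hτpos
  have hApos : 0 < Nat.choose h τ' := Nat.choose_pos (by omega)
  have hlt : Fintype.card (Fin (Nat.choose h τ')) * K <
      Fintype.card (Fin (Nat.choose h τ)) := by
    simp only [Fintype.card_fin]
    calc Nat.choose h τ' * K < Nat.choose h τ' * (K + 1) :=
          (Nat.mul_lt_mul_left hApos).mpr (Nat.lt_succ_self K)
      _ ≤ Nat.choose h τ := hmain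
  obtain ⟨p, hp⟩ := Fintype.exists_lt_card_fiber_of_mul_lt_card (f := f) hlt
  exact ⟨p, hp⟩
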